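/- Let Ω ⊂ ℝ³ be a measurable set of finite Lebesgue measure, let φ : ℝ³ → ℝ be continuous, and let α > 0. Let f_k : Ω → ℝ³ be measurable with sup_k ∫_Ω |f_k(x)|^α dx < ∞, and let B_k, B : Ω → ℝ^{3×3} be measurable matrix fields, uniformly bounded (sup_k sup_{x∈Ω} |B_k(x)| < ∞ and sup_{x∈Ω} |B(x)| < ∞), with sup_{x∈Ω} |B_k(x) − B(x)| → 0 as k → ∞. Then the functions x ↦ φ(B_k(x)·f_k(x)) − φ(B(x)·f_k(x)) converge to 0 in measure on Ω. -/

import Mathlib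

open MeasureTheory Filter

/- Equip matrices with the Frobenius norm. -/
attribute [local instance] Matrix.frobeniusNormedAddCommGroup

open scoped ENNReal NNReal

lemma frob_entry_le (A : Matrix (Fin 3) (Fin 3) ℝ) (i j : Fin 3) : ‖A i j‖ ≤ ‖A‖ := by
  rw [Matrix.frobenius_norm_def]
  have h1 : ‖A i j‖ = (‖A i j‖ ^ (2:ℝ)) ^ (1/2 : ℝ) := by
    rw [← Real.rpow_mul (norm_nonneg _)]
    norm_num
  rw [h1]
  apply Real.rpow_le_rpow (by positivity) ?_ (by norm_num)
  calc ‖A i j‖ ^ (2:ℝ) ≤ ∑ j', ‖A i j'‖ ^ (2:ℝ) :=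
        Finset.single_le_sum (f := fun j' => ‖A i j'‖ ^ (2:ℝ)) (fun _ _ => by positivity) (Finset.mem_univ j)
    _ ≤ ∑ i', ∑ j', ‖A i' j'‖ ^ (2:ℝ) :=
        Finset.single_le_sum (f := fun i' => ∑ j', ‖A i' j'‖ ^ (2:ℝ)) (fun _ _ => by positivity) (Finset.mem_univ i)

lemma mulVec_norm_le (A : Matrix (Fin 3) (Fin 3) ℝ) (v : Fin 3 → ℝ) :
    ‖A.mulVec v‖ ≤ 3 * ‖A‖ * ‖v‖ := by
  have hA : (0:ℝ) ≤ ‖A‖ := norm_nonneg _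
  have hv : (0:ℝ) ≤ ‖v‖ := norm_nonneg _
  rw [pi_norm_le_iff_of_nonneg (by positivity)]
  intro i
  calc ‖A.mulVec v i‖ = |∑ j, A i j * v j| := rfl
    _ ≤ ∑ j, |A i j * v j| := Finset.abs_sum_le_sum_abs _ _
    _ ≤ ∑ _j : Fin 3, ‖A‖ * ‖v‖ := by
        apply Finset.sum_le_sum
        intro j _
        rw [abs_mul]
        exact mul_le_mul (frob_entry_le A i j) ((norm_le_pi_norm v j)) (abs_nonneg _) hA
    _ = 3 * ‖A‖ * ‖v‖ := by simp [Finset.sum_const]; ring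

/-- If `φ` is continuous, the vector fields `f_k` are bounded
in `L^α`, and the matrix fields `B_k` are uniformly bounded and converge
uniformly to `B₀`, then `φ(B_k f_k) − φ(B₀ f_k) → 0` in measure on `Ω`. -/
theorem phi_difference_tendstoInMeasure
    (Ω : Set (EuclideanSpace ℝ (Fin 3))) (hΩ : MeasurableSet Ω)
    (hΩfin : volume Ω < ⊤)
    (φ : (Fin 3 → ℝ) → ℝ) (hφ : Continuous φ)
    (α : ℝ) (hα : 0 < α)
    (f : ℕ → EuclideanSpace ℝ (Fin 3) → (Fin 3 → ℝ))
    (hf_meas : ∀ k, Measurable (f k))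
    (hf_bdd : ∃ K : ℝ, ∀ k,
      (∫⁻ x in Ω, ENNReal.ofReal (‖f k x‖ ^ α)) ≤ ENNReal.ofReal K)
    (B : ℕ → EuclideanSpace ℝ (Fin 3) → Matrix (Fin 3) (Fin 3) ℝ)
    (B₀ : EuclideanSpace ℝ (Fin 3) → Matrix (Fin 3) (Fin 3) ℝ)
    (hB_meas : ∀ k, StronglyMeasurable (B k)) (hB₀_meas : StronglyMeasurable B₀)
    (hB_bdd : ∃ Mb : ℝ, (∀ k, ∀ x ∈ Ω, ‖B k x‖ ≤ Mb) ∧ (∀ x ∈ Ω, ‖B₀ x‖ ≤ Mb))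
    (hB_unif : TendstoUniformlyOn (fun k => B k) B₀ atTop Ω) :
    TendstoInMeasure (volume.restrict Ω)
      (fun k x => φ ((B k x).mulVec (f k x)) - φ ((B₀ x).mulVec (f k x)))
      atTop (fun _ => 0) := by
  obtain ⟨K, hK⟩ := hf_bdd
  obtain ⟨Mb, hBk, hB0⟩ := hB_bdd
  set μ := volume.restrict Ω with hμ
  intro ε hε
  set e : ℝ := (min ε 1).toReal with hedef
  have he : 0 < e := ENNReal.toReal_pos (lt_min hε one_pos).ne' (ne_top_of_le_ne_top ENNReal.one_ne_top (min_le_right _ _))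
  have hee : ENNReal.ofReal e ≤ ε := by
    rw [hedef, ENNReal.ofReal_toReal (ne_top_of_le_ne_top ENNReal.one_ne_top (min_le_right _ _))]
    exact min_le_left _ _
  rw [ENNReal.tendsto_nhds_zero]
  intro η hη
  obtain ⟨c, hc0, hcη⟩ := ENNReal.lt_iff_exists_nnreal_btwn.mp hη
  have hc0' : (0:ℝ) < (c:ℝ) := by exact_mod_cast hc0
  set K' : ℝ := max K 1 with hK'def
  have hK'pos : (0:ℝ) < K' := lt_of_lt_of_le one_pos (le_max_right _ _)
  set R : ℝ := (2 * K' / c) ^ (α⁻¹ : ℝ) with hRdef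
  have hfrac : (0:ℝ) < 2 * K' / c := by positivity
  have hR0 : 0 < R := Real.rpow_pos_of_pos hfrac _
  have hRα : R ^ α = 2 * K' / c := Real.rpow_inv_rpow hfrac.le hα.ne'
  -- Markov bound for every k
  have markov : ∀ k, μ {x | ENNReal.ofReal (R ^ α) ≤ ENNReal.ofReal (‖f k x‖ ^ α)} ≤ η := by
    intro k
    have hmeas : AEMeasurable (fun x => ENNReal.ofReal (‖f k x‖ ^ α)) μ :=
      (((hf_meas k).norm.pow_const α).ennreal_ofReal).aemeasurable
    have h1 := meas_ge_le_lintegral_div hmeas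
      (show ENNReal.ofReal (R ^ α) ≠ 0 by
        simp only [ne_eq, ENNReal.ofReal_eq_zero, not_le]
        positivity) ENNReal.ofReal_ne_top
    refine h1.trans ?_
    have h2 : (∫⁻ x, ENNReal.ofReal (‖f k x‖ ^ α) ∂μ) ≤ ENNReal.ofReal K' :=
      (hK k).trans (ENNReal.ofReal_le_ofReal (le_max_left _ _))
    refine (ENNReal.div_le_div_right h2 _).trans ?_
    rw [hRα, ← ENNReal.ofReal_div_of_pos hfrac]
    have h3 : K' / (2 * K' / c) = c / 2 := by
      field_simp
    rw [h3]
    calc ENNReal.ofReal ((c:ℝ) / 2) ≤ (c : ℝ≥0∞) / 2 := by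
          rw [ENNReal.ofReal_div_of_pos two_pos]
          simp [ENNReal.ofReal_coe_nnreal]
      _ ≤ (c : ℝ≥0∞) := ENNReal.half_le_self
      _ ≤ η := hcη.le
  -- uniform continuity of φ on a big ball
  set M : ℝ := max Mb 0 with hMdef
  have hM0 : 0 ≤ M := le_max_right _ _
  set C : ℝ := 3 * M * R with hCdef
  have hC0 : 0 ≤ C := by positivity
  have hUC := (isCompact_closedBall (0 : Fin 3 → ℝ) (C + 1)).uniformContinuousOn_of_continuous
    hφ.continuousOn
  rw [Metric.uniformContinuousOn_iff] at hUC
  obtain ⟨δ, hδ0, hδ⟩ := hUC e he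
  set δ' : ℝ := min δ 1 with hδ'def
  have hδ'0 : 0 < δ' := lt_min hδ0 one_pos
  have hδ'1 : δ' ≤ 1 := min_le_right _ _
  have hδ'δ : δ' ≤ δ := min_le_left _ _
  -- eventually B k is close to B₀
  have hev := (Metric.tendstoUniformlyOn_iff.mp hB_unif) (δ' / (3 * (R + 1)))
    (by positivity)
  filter_upwards [hev] with k hk
  -- key pointwise estimate
  have key : ∀ x ∈ Ω, ‖f k x‖ < R →
      dist (φ ((B k x).mulVec (f k x)) - φ ((B₀ x).mulVec (f k x))) 0 < e := by
    intro x hx hfx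
    set w := f k x
    set u := (B₀ x).mulVec w with hu
    set v := (B k x).mulVec w with hv
    have hB0M : ‖B₀ x‖ ≤ M := (hB0 x hx).trans (le_max_left _ _)
    have hunorm : ‖u‖ ≤ C := by
      calc ‖u‖ ≤ 3 * ‖B₀ x‖ * ‖w‖ := mulVec_norm_le _ _
        _ ≤ 3 * M * R := by
            apply mul_le_mul _ hfx.le (norm_nonneg _) (by positivity)
            nlinarith [norm_nonneg (B₀ x)]
    have hdiff : ‖v - u‖ < δ' := by
      have h1 : v - u = (B k x - B₀ x).mulVec w := by
        rw [Matrix.sub_mulVec]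
      have h2 : ‖B k x - B₀ x‖ < δ' / (3 * (R + 1)) := by
        rw [← dist_eq_norm, dist_comm]
        exact hk x hx
      calc ‖v - u‖ = ‖(B k x - B₀ x).mulVec w‖ := by rw [h1]
        _ ≤ 3 * ‖B k x - B₀ x‖ * ‖w‖ := mulVec_norm_le _ _
        _ ≤ 3 * (δ' / (3 * (R + 1))) * R := by
            apply mul_le_mul _ hfx.le (norm_nonneg _) (by positivity)
            nlinarith [norm_nonneg (B k x - B₀ x)]
        _ = δ' * (R / (R + 1)) := by field_simp
        _ < δ' * 1 := by
            apply mul_lt_mul_of_pos_left _ hδ'0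
            rw [div_lt_one (by linarith)]
            linarith
        _ = δ' := mul_one _
    have hvnorm : ‖v‖ ≤ C + 1 := by
      calc ‖v‖ = ‖u + (v - u)‖ := by ring_nf
        _ ≤ ‖u‖ + ‖v - u‖ := norm_add_le _ _
        _ ≤ C + 1 := add_le_add hunorm (hdiff.le.trans hδ'1)
    have humem : u ∈ Metric.closedBall (0 : Fin 3 → ℝ) (C + 1) := by
      simp [Metric.mem_closedBall, dist_zero_right]
      linarith
    have hvmem : v ∈ Metric.closedBall (0 : Fin 3 → ℝ) (C + 1) := by
      simp [Metric.mem_closedBall, dist_zero_right]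
      linarith
    have := hδ v hvmem u humem (by rw [dist_eq_norm]; exact lt_of_lt_of_le hdiff hδ'δ)
    rw [Real.dist_eq] at this ⊢
    simpa using this
  -- conclude via inclusion into the Markov set
  refine le_trans ?_ (markov k)
  rw [hμ, Measure.restrict_apply' hΩ, Measure.restrict_apply' hΩ]
  apply measure_mono
  rintro x ⟨hxd, hxΩ⟩
  refine ⟨?_, hxΩ⟩
  simp only [Set.mem_setOf_eq]
  by_contra hcon
  push_neg at hcon
  have hfR : ‖f k x‖ < R := by
    by_contra hge
    push_neg at hge
    have : R ^ α ≤ ‖f k x‖ ^ α := Real.rpow_le_rpow hR0.le hge hα.le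
    exact absurd (ENNReal.ofReal_le_ofReal this) (not_le.mpr hcon)
  have hxd' : ε ≤ ENNReal.ofReal (dist (φ ((B k x).mulVec (f k x)) - φ ((B₀ x).mulVec (f k x))) 0) := by
    rw [← edist_dist]; exact hxd
  exact (lt_irrefl ε) (hxd'.trans_lt (((ENNReal.ofReal_lt_ofReal_iff he).mpr (key x hxΩ hfR)).trans_le hee))
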